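/- arXiv:1705.07268 — 5 statements merged into one kernel-verified Lean document; each statement's English description precedes it below -/
import Mathlib

section
/- The map x ↦ J·xᵀ·J⁻¹ on M_{2n}(F) maps the field K = F[β] into itself, its restriction τ to K is an F-algebra automorphism of K with τ(β) = −β, and τ has order exactly 2. -/
open Matrix

/-- The matrix `J = [[0, I'ₙ],[−I'ₙ, 0]]` where `I'ₙ` is the antidiagonal identity. -/
def Jmat (R : Type*) [CommRing R] (n : ℕ) : Matrix (Fin (2*n)) (Fin (2*n)) R :=
  Matrix.of fun i j =>
    if (i : ℕ) + (j : ℕ) = 2*n - 1 then (if (i : ℕ) < n then (1 : R) else -1) else 0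

/-- The symplectic group `Sp_{2n}(R)` as a set of matrices. -/
def SpSet (n : ℕ) (R : Type*) [CommRing R] : Set (Matrix (Fin (2*n)) (Fin (2*n)) R) :=
  {g | IsUnit g.det ∧ g * Jmat R n * gᵀ = Jmat R n}

/-- The symplectic Lie algebra `sp_{2n}(R)` as a set of matrices. -/
def spSet (n : ℕ) (R : Type*) [CommRing R] : Set (Matrix (Fin (2*n)) (Fin (2*n)) R) :=
  {X | X * Jmat R n + Jmat R n * Xᵀ = 0}

section aux

variable {F : Type*} [Field F] {n : ℕ}

lemma Jmat_transpose : (Jmat F n)ᵀ = -(Jmat F n) := by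
  ext i j
  have hi := i.isLt
  have hj := j.isLt
  simp only [transpose_apply, Jmat, of_apply, Matrix.neg_apply]
  by_cases h : (j : ℕ) + i = 2*n - 1
  · have h' : (i : ℕ) + j = 2*n - 1 := by omega
    rw [if_pos h, if_pos h']
    by_cases hj' : (j : ℕ) < n
    · rw [if_pos hj', if_neg (by omega), neg_neg]
    · rw [if_neg hj', if_pos (by omega)]
  · rw [if_neg h, if_neg (by omega), neg_zero]

lemma Jmat_mul_Jmat : Jmat F n * Jmat F n = -1 := by
  ext i j
  have hi := i.isLt
  have hj := j.isLt
  set k₀ : Fin (2*n) := ⟨2*n - 1 - i, by omega⟩ with hk₀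
  have hkval : (k₀ : ℕ) = 2*n - 1 - i := rfl
  rw [mul_apply, Finset.sum_eq_single k₀]
  · simp only [Jmat, of_apply, Matrix.neg_apply, one_apply]
    have h1 : (i : ℕ) + k₀ = 2*n - 1 := by omega
    rw [if_pos h1]
    by_cases hij : i = j
    · subst hij
      have h2 : (k₀ : ℕ) + i = 2*n - 1 := by omega
      rw [if_pos h2, if_pos rfl]
      by_cases hin : (i : ℕ) < n
      · rw [if_pos hin, if_neg (by omega)]
        ring
      · rw [if_neg hin, if_pos (by omega)]
        ring
    · have h2 : ¬ ((k₀ : ℕ) + j = 2*n - 1) := by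
        intro h
        apply hij
        apply Fin.ext
        omega
      rw [if_neg h2, if_neg (by simpa [eq_comm] using hij : ¬ (i = j))]
      ring
  · intro b _ hb
    have hbne : (i : ℕ) + b ≠ 2*n - 1 := by
      intro h
      apply hb
      apply Fin.ext
      omega
    simp [Jmat, hbne]
  · intro h
    exact absurd (Finset.mem_univ k₀) h

lemma Jmat_inv : (Jmat F n)⁻¹ = -(Jmat F n) :=
  inv_eq_left_inv (by rw [neg_mul, Jmat_mul_Jmat, neg_neg])

lemma Jmat_mul_inv : Jmat F n * (Jmat F n)⁻¹ = 1 := by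
  rw [Jmat_inv, mul_neg, Jmat_mul_Jmat, neg_neg]

lemma Jmat_inv_mul : (Jmat F n)⁻¹ * Jmat F n = 1 := by
  rw [Jmat_inv, neg_mul, Jmat_mul_Jmat, neg_neg]

lemma Jconj_one : Jmat F n * (1 : Matrix (Fin (2*n)) (Fin (2*n)) F)ᵀ * (Jmat F n)⁻¹ = 1 := by
  rw [transpose_one, mul_one, Jmat_mul_inv]

lemma Jconj_mul (x y : Matrix (Fin (2*n)) (Fin (2*n)) F) :
    Jmat F n * (x * y)ᵀ * (Jmat F n)⁻¹
      = (Jmat F n * yᵀ * (Jmat F n)⁻¹) * (Jmat F n * xᵀ * (Jmat F n)⁻¹) := by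
  rw [transpose_mul]
  simp only [mul_assoc]
  rw [← mul_assoc ((Jmat F n)⁻¹) (Jmat F n), Jmat_inv_mul, one_mul]

lemma Jconj_add (x y : Matrix (Fin (2*n)) (Fin (2*n)) F) :
    Jmat F n * (x + y)ᵀ * (Jmat F n)⁻¹
      = Jmat F n * xᵀ * (Jmat F n)⁻¹ + Jmat F n * yᵀ * (Jmat F n)⁻¹ := by
  rw [transpose_add, mul_add, add_mul]

lemma Jconj_algebraMap (r : F) :
    Jmat F n * ((algebraMap F (Matrix (Fin (2*n)) (Fin (2*n)) F)) r)ᵀ * (Jmat F n)⁻¹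
      = algebraMap F (Matrix (Fin (2*n)) (Fin (2*n)) F) r := by
  rw [Algebra.algebraMap_eq_smul_one, transpose_smul, transpose_one, mul_smul_comm,
    mul_one, smul_mul_assoc, Jmat_mul_inv]

lemma Jconj_invol (x : Matrix (Fin (2*n)) (Fin (2*n)) F) :
    Jmat F n * (Jmat F n * xᵀ * (Jmat F n)⁻¹)ᵀ * (Jmat F n)⁻¹ = x := by
  rw [Jmat_inv]
  rw [transpose_mul, transpose_mul, transpose_neg, transpose_transpose, Jmat_transpose, neg_neg]
  simp only [mul_neg, neg_mul, neg_neg]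
  simp only [← mul_assoc]
  rw [Jmat_mul_Jmat, mul_assoc (-1 * x), Jmat_mul_Jmat]
  simp

end aux

/-- The map `x ↦ J·xᵀ·J⁻¹` maps `K = F[β]` into itself, restricts to an `F`-algebra
automorphism `τ` of `K` with `τ(β) = -β`, and `τ` has order exactly `2`. -/
theorem stmt3 (n : ℕ) (hn : 1 ≤ n) (F : Type*) [Field F] (h2 : (2 : F) ≠ 0)
    (β : Matrix (Fin (2*n)) (Fin (2*n)) F) (hβ : β ∈ spSet n F)
    (hirr : Irreducible β.charpoly) :
    (∀ x ∈ Algebra.adjoin F {β},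
        Jmat F n * xᵀ * (Jmat F n)⁻¹ ∈ Algebra.adjoin F {β}) ∧
    ∃ τ : ↥(Algebra.adjoin F {β}) ≃ₐ[F] ↥(Algebra.adjoin F {β}),
      (∀ x : ↥(Algebra.adjoin F {β}),
          (τ x : Matrix (Fin (2*n)) (Fin (2*n)) F)
            = Jmat F n * (x : Matrix (Fin (2*n)) (Fin (2*n)) F)ᵀ * (Jmat F n)⁻¹) ∧
      (τ ⟨β, Algebra.subset_adjoin rfl⟩ : Matrix (Fin (2*n)) (Fin (2*n)) F) = -β ∧
      (∀ x, τ (τ x) = x) ∧ τ ≠ AlgEquiv.refl := by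
  have hfβ : Jmat F n * βᵀ * (Jmat F n)⁻¹ = -β := by
    have h0 : β * Jmat F n + Jmat F n * βᵀ = 0 := hβ
    have h : Jmat F n * βᵀ = -(β * Jmat F n) := by
      rw [eq_neg_iff_add_eq_zero, add_comm]
      exact h0
    rw [h, neg_mul, mul_assoc, Jmat_mul_inv, mul_one]
  have hmemf : ∀ x ∈ Algebra.adjoin F {β},
      Jmat F n * xᵀ * (Jmat F n)⁻¹ ∈ Algebra.adjoin F {β} := by
    intro x hx
    induction hx using Algebra.adjoin_induction with
    | mem x hx =>
      rcases hx with rfl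
      rw [hfβ]
      exact neg_mem (Algebra.subset_adjoin rfl)
    | algebraMap r => rw [Jconj_algebraMap]; exact Subalgebra.algebraMap_mem _ r
    | add x y hx hy ihx ihy => rw [Jconj_add]; exact add_mem ihx ihy
    | mul x y hx hy ihx ihy => rw [Jconj_mul]; exact mul_mem ihy ihx
  refine ⟨hmemf, ?_⟩
  have hcomm : ∀ x ∈ Algebra.adjoin F {β}, ∀ y ∈ Algebra.adjoin F {β}, x * y = y * x := by
    intro x hx y hy
    rw [Algebra.adjoin_singleton_eq_range_aeval] at hx hy
    obtain ⟨p, rfl⟩ := hx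
    obtain ⟨q, rfl⟩ := hy
    rw [← RingHom.map_mul, ← RingHom.map_mul]; exact congrArg _ (mul_comm p q)
  have hβK : β ∈ Algebra.adjoin F {β} := Algebra.subset_adjoin rfl
  have hβ0 : β ≠ 0 := by
    intro h
    rw [h] at hirr
    have hdeg : (Matrix.charpoly (0 : Matrix (Fin (2*n)) (Fin (2*n)) F)).natDegree = 2*n := by
      rw [Matrix.charpoly_natDegree_eq_dim, Fintype.card_fin]
    have hne : Nonempty (Fin (2*n)) := ⟨⟨0, by omega⟩⟩
    have hcoeff : (Matrix.charpoly (0 : Matrix (Fin (2*n)) (Fin (2*n)) F)).coeff 0 = 0 := by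
      have hd := Matrix.det_eq_sign_charpoly_coeff (0 : Matrix (Fin (2*n)) (Fin (2*n)) F)
      rw [Matrix.det_zero] at hd
      have h0 : ((-1 : F) ^ Fintype.card (Fin (2*n))) ≠ 0 := by
        apply pow_ne_zero
        intro h
        exact one_ne_zero (neg_eq_zero.mp h)
      exact (mul_eq_zero.mp hd.symm).resolve_left h0
    obtain ⟨c, hc⟩ := Polynomial.X_dvd_iff.mpr hcoeff
    rcases hirr.isUnit_or_isUnit hc with h' | h'
    · exact Polynomial.not_isUnit_X h'
    · have hc0 : c ≠ 0 := h'.ne_zero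
      have hd1 : (Matrix.charpoly (0 : Matrix (Fin (2*n)) (Fin (2*n)) F)).natDegree = 1 := by
        rw [hc, Polynomial.natDegree_mul Polynomial.X_ne_zero hc0,
          Polynomial.natDegree_X, Polynomial.natDegree_eq_zero_of_isUnit h']
      omega
  let g : ↥(Algebra.adjoin F {β}) →ₐ[F] ↥(Algebra.adjoin F {β}) :=
    { toFun := fun x => ⟨Jmat F n * (x : Matrix (Fin (2*n)) (Fin (2*n)) F)ᵀ * (Jmat F n)⁻¹,
        hmemf _ x.2⟩
      map_one' := Subtype.ext Jconj_one
      map_mul' := fun x y => Subtype.ext (by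
        show Jmat F n * ((x : Matrix (Fin (2*n)) (Fin (2*n)) F)
            * (y : Matrix (Fin (2*n)) (Fin (2*n)) F))ᵀ * (Jmat F n)⁻¹
          = (Jmat F n * (x : Matrix (Fin (2*n)) (Fin (2*n)) F)ᵀ * (Jmat F n)⁻¹)
            * (Jmat F n * (y : Matrix (Fin (2*n)) (Fin (2*n)) F)ᵀ * (Jmat F n)⁻¹)
        rw [Jconj_mul]
        exact hcomm _ (hmemf _ y.2) _ (hmemf _ x.2))
      map_zero' := Subtype.ext (by
        show Jmat F n * (0 : Matrix (Fin (2*n)) (Fin (2*n)) F)ᵀ * (Jmat F n)⁻¹ = 0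
        simp)
      map_add' := fun x y => Subtype.ext (Jconj_add _ _)
      commutes' := fun r => Subtype.ext (Jconj_algebraMap r) }
  have hgg : ∀ x : ↥(Algebra.adjoin F {β}), g (g x) = x := fun x =>
    Subtype.ext (Jconj_invol (x : Matrix (Fin (2*n)) (Fin (2*n)) F))
  let τ : ↥(Algebra.adjoin F {β}) ≃ₐ[F] ↥(Algebra.adjoin F {β}) :=
    AlgEquiv.ofAlgHom g g (AlgHom.ext hgg) (AlgHom.ext hgg)
  refine ⟨τ, fun x => rfl, hfβ, fun x => hgg x, ?_⟩
  intro h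
  have hb : (τ ⟨β, hβK⟩ : Matrix (Fin (2*n)) (Fin (2*n)) F) = β := by rw [h]; rfl
  have hb' : -β = β := by rw [← hfβ]; exact hb
  have hβ2 : (2 : F) • β = 0 := by
    rw [two_smul]
    nth_rewrite 1 [← hb']
    exact neg_add_cancel β
  rcases smul_eq_zero.mp hβ2 with h' | h'
  · exact h2 h'
  · exact hβ0 h'
end

section
/- The F-vector space t = {X ∈ sp_{2n}(F) : X·β = β·X} (the centralizer of β inside sp_{2n}(F)) has dimension exactly n over F. -/
open Matrix Polynomial

lemma Jmat_mul_self (R : Type*) [CommRing R] (n : ℕ) (hn : 1 ≤ n) :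
    Jmat R n * Jmat R n = -1 := by
  ext i j
  rw [Matrix.mul_apply]
  have hi := i.isLt
  have hj := j.isLt
  rw [Finset.sum_eq_single (⟨2*n-1-(i:ℕ), by omega⟩ : Fin (2*n))]
  · by_cases hij : (i:ℕ) = j
    · have h1 : (i:ℕ) + (2*n-1-(i:ℕ)) = 2*n-1 := by omega
      have h2 : (2*n-1-(i:ℕ)) + (j:ℕ) = 2*n-1 := by omega
      simp only [Jmat, of_apply, h1, h2, if_true]
      by_cases hc : (i:ℕ) < n
      · have hcj : (j:ℕ) < n := by omega
        have hc2 : ¬ (2*n-1-(j:ℕ) < n) := by omega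
        simp [hc, hcj, hc2, Matrix.neg_apply, Matrix.one_apply, Fin.ext_iff, hij]
      · have hcj : ¬ ((j:ℕ) < n) := by omega
        have hc2 : (2*n-1-(j:ℕ) < n) := by omega
        simp [hc, hcj, hc2, Matrix.neg_apply, Matrix.one_apply, Fin.ext_iff, hij]
    · have h2 : ¬((2*n-1-(i:ℕ)) + (j:ℕ) = 2*n-1) := by omega
      simp [Jmat, h2, Matrix.neg_apply, Matrix.one_apply, Fin.ext_iff, hij]
  · intro k _ hk
    have hk' : ¬((i:ℕ) + (k:ℕ) = 2*n-1) := by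
      intro h
      apply hk
      apply Fin.ext
      simp only []
      omega
    simp [Jmat, hk']
  · intro h; exact absurd (Finset.mem_univ _) h

set_option maxHeartbeats 2000000 in
/-- The centralizer of `β` inside `sp_{2n}(F)` has dimension exactly `n` over `F`. -/
theorem stmt4 (n : ℕ) (hn : 1 ≤ n) (F : Type*) [Field F] (h2 : (2 : F) ≠ 0)
    (β : Matrix (Fin (2*n)) (Fin (2*n)) F) (hβ : β ∈ spSet n F)
    (hirr : Irreducible β.charpoly)
    (t : Submodule F (Matrix (Fin (2*n)) (Fin (2*n)) F))
    (ht : (t : Set (Matrix (Fin (2*n)) (Fin (2*n)) F))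
            = {X | X ∈ spSet n F ∧ X * β = β * X}) :
    Module.finrank F ↥t = n := by
  classical
  haveI : Nontrivial (Matrix (Fin (2*n)) (Fin (2*n)) F) := by
    have i0 : Fin (2*n) := ⟨0, by omega⟩
    refine ⟨1, 0, fun h => one_ne_zero (α := F) ?_⟩
    have h1 := congrFun (congrFun h i0) i0
    rwa [Matrix.one_apply_eq, Matrix.zero_apply] at h1
  set p := β.charpoly with hpdef
  haveI : Fact (Irreducible p) := ⟨hirr⟩
  set K := AdjoinRoot p with hKdef
  have hp0 : p ≠ 0 := hirr.ne_zero
  have hdeg : p.natDegree = 2*n := by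
    rw [hpdef, Matrix.charpoly_natDegree_eq_dim, Fintype.card_fin]
  haveI : FiniteDimensional F K := Module.Finite.of_basis (AdjoinRoot.powerBasis hp0).basis
  have hK : Module.finrank F K = 2*n := by
    rw [(AdjoinRoot.powerBasis hp0).finrank, AdjoinRoot.powerBasis_dim, hdeg]
  -- the algebra map K → M
  have hpmem : ∀ a ∈ Ideal.span {p}, (Polynomial.aeval β) a = 0 := by
    intro a ha
    rw [Ideal.mem_span_singleton] at ha
    obtain ⟨c, rfl⟩ := ha
    rw [_root_.map_mul, hpdef, Matrix.aeval_self_charpoly, zero_mul]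
  set φ : K →ₐ[F] Matrix (Fin (2*n)) (Fin (2*n)) F :=
    Ideal.Quotient.liftₐ (Ideal.span {p}) (Polynomial.aeval β) hpmem with hφdef
  have hφmk : ∀ g : F[X], φ (AdjoinRoot.mk p g) = aeval β g := fun g => rfl
  have hφr : φ (AdjoinRoot.root p) = β := by
    rw [← AdjoinRoot.mk_X, hφmk, aeval_X]
  have hφinj : Function.Injective φ :=
    RingHom.injective (φ : K →+* Matrix (Fin (2*n)) (Fin (2*n)) F)
  -- the involution τ
  set J : Matrix (Fin (2*n)) (Fin (2*n)) F := Jmat F n with hJdef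
  have hJJ : J * J = -1 := Jmat_mul_self F n hn
  set τ : Matrix (Fin (2*n)) (Fin (2*n)) F →ₗ[F] Matrix (Fin (2*n)) (Fin (2*n)) F :=
    { toFun := fun X => -(J * Xᵀ * J)
      map_add' := by
        intro X Y
        show -(J * (X + Y)ᵀ * J) = -(J * Xᵀ * J) + -(J * Yᵀ * J)
        rw [Matrix.transpose_add]
        noncomm_ring
      map_smul' := by
        intro c X
        show -(J * (c • X)ᵀ * J) = (RingHom.id F) c • -(J * Xᵀ * J)
        rw [Matrix.transpose_smul, RingHom.id_apply, Matrix.mul_smul, Matrix.smul_mul,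
          smul_neg] } with hτdef
  have hτapp : ∀ X : Matrix (Fin (2*n)) (Fin (2*n)) F, τ X = -(J * Xᵀ * J) := fun _ => rfl
  have hτmul : ∀ X Y : Matrix (Fin (2*n)) (Fin (2*n)) F, τ (X * Y) = τ Y * τ X := by
    intro X Y
    rw [hτapp, hτapp, hτapp, neg_mul_neg, Matrix.transpose_mul]
    have key : J * Yᵀ * J * (J * Xᵀ * J) = J * Yᵀ * (J * J) * Xᵀ * J := by
      noncomm_ring
    rw [key, hJJ]
    noncomm_ring
  have hτone : τ (1 : Matrix (Fin (2*n)) (Fin (2*n)) F) = 1 := by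
    rw [hτapp, Matrix.transpose_one, Matrix.mul_one, hJJ, neg_neg]
  have hτβ : τ β = -β := by
    have hβ' : β * J + J * βᵀ = 0 := hβ
    have h1 : J * βᵀ = -(β * J) := eq_neg_of_add_eq_zero_right hβ'
    rw [hτapp, h1]
    have key : -(-(β * J) * J) = β * (J * J) := by noncomm_ring
    rw [key, hJJ]
    noncomm_ring
  have hτpow : ∀ k : ℕ, τ (β ^ k) = (-β) ^ k := by
    intro k
    induction k with
    | zero => simpa using hτone
    | succ k ih =>
        rw [pow_succ, hτmul, hτβ, ih, pow_succ']
  have hτaeval : ∀ q : F[X], τ (aeval β q) = aeval (-β) q := by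
    intro q
    induction q using Polynomial.induction_on' with
    | add q r hq hr => rw [_root_.map_add, _root_.map_add, _root_.map_add, hq, hr]
    | monomial k a =>
        rw [aeval_monomial, aeval_monomial, ← Algebra.smul_def, ← Algebra.smul_def,
          _root_.map_smul, hτpow]
  have haevalneg : aeval (-β) p = 0 := by
    rw [← hτaeval, hpdef, Matrix.aeval_self_charpoly, _root_.map_zero]
  -- the automorphism ν of K
  have hroot : aeval (-(AdjoinRoot.root p)) p = 0 := by
    apply hφinj
    rw [← Polynomial.aeval_algHom_apply, _root_.map_neg, hφr, haevalneg, _root_.map_zero]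
  set ν : K →ₐ[F] K := AdjoinRoot.liftAlgHom p (Algebra.ofId F K) (-(AdjoinRoot.root p)) hroot with hνdef
  have hνr : ν (AdjoinRoot.root p) = -(AdjoinRoot.root p) := AdjoinRoot.liftAlgHom_root p _ _ _
  have hν2 : ∀ k : K, ν (ν k) = k := by
    have hcomp : ν.comp ν = AlgHom.id F K := by
      apply AdjoinRoot.algHom_ext
      simp [hνr, map_neg]
      exact neg_neg _
    intro k
    exact DFunLike.congr_fun hcomp k
  have hτφ : ∀ k : K, τ (φ k) = φ (ν k) := by
    intro k
    refine AdjoinRoot.induction_on _ k ?_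
    intro q
    rw [hφmk, show ν (AdjoinRoot.mk p q) = aeval (-(AdjoinRoot.root p)) q from rfl, hτaeval]
    rw [← Polynomial.aeval_algHom_apply, _root_.map_neg, hφr]
  -- characterization of spSet
  have hsp : ∀ X : Matrix (Fin (2*n)) (Fin (2*n)) F, X ∈ spSet n F ↔ τ X = -X := by
    intro X
    constructor
    · intro h
      have h' : X * J + J * Xᵀ = 0 := h
      have h1 : J * Xᵀ = -(X * J) := eq_neg_of_add_eq_zero_right h'
      rw [hτapp, h1]
      have key : -(-(X * J) * J) = X * (J * J) := by noncomm_ring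
      rw [key, hJJ]
      noncomm_ring
    · intro h
      rw [hτapp] at h
      have h1 : J * Xᵀ * J = X := neg_injective h
      show X * J + J * Xᵀ = 0
      have h3 : X * J = -(J * Xᵀ) := by
        conv_lhs => rw [← h1]
        rw [Matrix.mul_assoc (J * Xᵀ) J J, hJJ, Matrix.mul_neg, Matrix.mul_one]
      rw [h3]
      exact neg_add_cancel _
  -- V as a K-module
  letI instKV : Module K (Fin (2*n) → F) :=
    Module.compHom (Fin (2*n) → F)
      ((Matrix.toLinAlgEquiv'.toAlgHom.comp φ :
        K →ₐ[F] Module.End F (Fin (2*n) → F)) : K →+* Module.End F (Fin (2*n) → F))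
  have hsmul : ∀ (k : K) (v : Fin (2*n) → F), k • v = (φ k).mulVec v := fun _ _ => rfl
  haveI : IsScalarTower F K (Fin (2*n) → F) := by
    constructor
    intro a k v
    rw [hsmul, hsmul, _root_.map_smul, Matrix.smul_mulVec]
  haveI : FiniteDimensional K (Fin (2*n) → F) :=
    Module.Finite.of_restrictScalars_finite F K (Fin (2*n) → F)
  have hVr : Module.finrank F (Fin (2*n) → F) = 2*n := Module.finrank_fin_fun F
  have hKV : Module.finrank K (Fin (2*n) → F) = 1 := by
    have h := Module.finrank_mul_finrank F K (Fin (2*n) → F)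
    rw [hK, hVr] at h
    have h2n : 0 < 2*n := by omega
    have heq : 2*n * Module.finrank K (Fin (2*n) → F) = 2*n * 1 := by rw [h, mul_one]
    exact Nat.eq_of_mul_eq_mul_left h2n heq
  -- a cyclic vector
  set v0 : Fin (2*n) → F := fun _ => 1 with hv0def
  have hv0 : v0 ≠ 0 := by
    intro h
    have h1 := congrFun h ⟨0, by omega⟩
    simp [hv0def] at h1
  have hsurj : ∀ u : Fin (2*n) → F, ∃ k : K, k • v0 = u := by
    have hinj : Function.Injective (LinearMap.toSpanSingleton K (Fin (2*n) → F) v0) := by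
      rw [← LinearMap.ker_eq_bot]
      exact LinearMap.ker_toSpanSingleton K hv0
    have hfr : Module.finrank K K = Module.finrank K (Fin (2*n) → F) := by
      rw [Module.finrank_self, hKV]
    have hs := (LinearMap.injective_iff_surjective_of_finrank_eq_finrank hfr).mp hinj
    intro u
    obtain ⟨k, hk⟩ := hs u
    exact ⟨k, hk⟩
  -- centralizer is the image of φ
  have hcent : ∀ X : Matrix (Fin (2*n)) (Fin (2*n)) F, X * β = β * X → ∃ k : K, φ k = X := by
    intro X hX
    have hcomm : ∀ k : K, X * φ k = φ k * X := by
      intro k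
      refine AdjoinRoot.induction_on _ k ?_
      intro q
      rw [hφmk]
      induction q using Polynomial.induction_on' with
      | add q r hq hr => rw [_root_.map_add, Matrix.mul_add, Matrix.add_mul, hq, hr]
      | monomial k a =>
          rw [aeval_monomial, ← Algebra.smul_def, Matrix.mul_smul, Matrix.smul_mul]
          congr 1
          induction k with
          | zero => simp
          | succ k ih =>
              rw [pow_succ, ← Matrix.mul_assoc, ih, Matrix.mul_assoc, hX,
                ← Matrix.mul_assoc]
    obtain ⟨k, hk⟩ := hsurj (X.mulVec v0)
    refine ⟨k, ?_⟩
    have hall : ∀ u : Fin (2*n) → F, (φ k).mulVec u = X.mulVec u := by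
      intro u
      obtain ⟨c, hc⟩ := hsurj u
      rw [← hc, hsmul, Matrix.mulVec_mulVec, Matrix.mulVec_mulVec,
        show φ k * φ c = φ c * φ k by
          rw [← _root_.map_mul, ← _root_.map_mul]; exact congrArg φ (mul_comm k c),
        hcomm c, ← Matrix.mulVec_mulVec, ← Matrix.mulVec_mulVec, ← hsmul k v0, hk]
    apply Matrix.toLin'.injective
    exact LinearMap.ext fun u => by
      rw [Matrix.toLin'_apply, Matrix.toLin'_apply]; exact hall u
  -- eigenspaces of ν
  set Epos : Submodule F K := LinearMap.ker (ν.toLinearMap - LinearMap.id) with hEposdef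
  set Eneg : Submodule F K := LinearMap.ker (ν.toLinearMap + LinearMap.id) with hEnegdef
  have hmemp : ∀ x : K, x ∈ Epos ↔ ν x = x := by
    intro x
    rw [hEposdef, LinearMap.mem_ker, LinearMap.sub_apply, LinearMap.id_apply, sub_eq_zero]
    rfl
  have hmemn : ∀ x : K, x ∈ Eneg ↔ ν x = -x := by
    intro x
    rw [hEnegdef, LinearMap.mem_ker, LinearMap.add_apply, LinearMap.id_apply,
      add_eq_zero_iff_eq_neg]
    rfl
  have hsup : Epos ⊔ Eneg = ⊤ := by
    rw [eq_top_iff]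
    rintro x -
    have hx : x = (2:F)⁻¹ • (x + ν x) + (2:F)⁻¹ • (x - ν x) := by
      rw [← smul_add, show (x + ν x) + (x - ν x) = (2:F) • x by
        rw [two_smul]; abel, smul_smul, inv_mul_cancel₀ h2, one_smul]
    rw [hx]
    refine Submodule.add_mem_sup ?_ ?_
    · rw [hmemp, _root_.map_smul, _root_.map_add, hν2]
      rw [add_comm]
    · rw [hmemn, _root_.map_smul, _root_.map_sub, hν2, ← smul_neg]
      congr 1
      abel
  have hinf : Epos ⊓ Eneg = ⊥ := by
    rw [eq_bot_iff]
    intro x hx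
    have h1 := (hmemp x).mp (Submodule.mem_inf.mp hx).1
    have h2' := (hmemn x).mp (Submodule.mem_inf.mp hx).2
    have hxx : (2:F) • x = 0 := by
      rw [two_smul]
      nth_rewrite 1 [← h1]
      rw [h2']; abel
    rw [Submodule.mem_bot]
    rcases smul_eq_zero.mp hxx with h | h
    · exact absurd h h2
    · exact h
  -- root is nonzero
  have hr0 : AdjoinRoot.root p ≠ 0 := by
    intro h
    have hmk : AdjoinRoot.mk p X = 0 := by rw [AdjoinRoot.mk_X, h]
    have hdvd : p ∣ (X : F[X]) := AdjoinRoot.mk_eq_zero.mp hmk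
    have hle := Polynomial.natDegree_le_of_dvd hdvd Polynomial.X_ne_zero
    rw [hdeg, Polynomial.natDegree_X] at hle
    omega
  -- the two eigenspaces have the same dimension
  have hEE : Module.finrank F ↥Epos = Module.finrank F ↥Eneg := by
    set f : K →ₗ[F] K := LinearMap.mulLeft F (AdjoinRoot.root p) with hfdef
    have hfinj : Function.Injective f := fun a b hab => by
      have hab' : AdjoinRoot.root p * a = AdjoinRoot.root p * b := hab
      exact mul_left_cancel₀ hr0 hab'
    have hle1 : Submodule.map f Epos ≤ Eneg := by
      rintro y hy
      obtain ⟨x, hx, rfl⟩ := Submodule.mem_map.mp hy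
      have hx' := (hmemp x).mp hx
      refine (hmemn _).mpr ?_
      show ν (AdjoinRoot.root p * x) = -(AdjoinRoot.root p * x)
      rw [_root_.map_mul, hνr, hx', neg_mul]
    have hle2 : Submodule.map f Eneg ≤ Epos := by
      rintro y hy
      obtain ⟨x, hx, rfl⟩ := Submodule.mem_map.mp hy
      have hx' := (hmemn x).mp hx
      refine (hmemp _).mpr ?_
      show ν (AdjoinRoot.root p * x) = AdjoinRoot.root p * x
      rw [_root_.map_mul, hνr, hx', neg_mul, mul_neg, neg_neg]
    have e1 : Module.finrank F ↥Epos ≤ Module.finrank F ↥Eneg := by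
      have := LinearEquiv.finrank_eq (Submodule.equivMapOfInjective f hfinj Epos)
      rw [this]
      exact Submodule.finrank_mono hle1
    have e2 : Module.finrank F ↥Eneg ≤ Module.finrank F ↥Epos := by
      have := LinearEquiv.finrank_eq (Submodule.equivMapOfInjective f hfinj Eneg)
      rw [this]
      exact Submodule.finrank_mono hle2
    omega
  have htot : Module.finrank F ↥Epos + Module.finrank F ↥Eneg = 2*n := by
    have h := Submodule.finrank_sup_add_finrank_inf_eq Epos Eneg
    rw [hsup, hinf] at h
    rw [finrank_top, hK, finrank_bot, add_zero] at h
    omega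
  have hEneg : Module.finrank F ↥Eneg = n := by omega
  -- t is the image of Eneg under φ
  have hteq : t = Submodule.map φ.toLinearMap Eneg := by
    apply Submodule.ext
    intro X
    have hXt : X ∈ t ↔ X ∈ spSet n F ∧ X * β = β * X := by
      constructor
      · intro h
        have hX : X ∈ (t : Set (Matrix (Fin (2*n)) (Fin (2*n)) F)) := h
        rw [ht] at hX
        exact hX
      · intro h
        have hX : X ∈ (t : Set (Matrix (Fin (2*n)) (Fin (2*n)) F)) := by rw [ht]; exact h
        exact hX
    rw [hXt]
    constructor
    · rintro ⟨hXsp, hXc⟩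
      obtain ⟨k, hk⟩ := hcent X hXc
      refine ⟨k, (hmemn k).mpr ?_, hk⟩
      apply hφinj
      rw [← hτφ, hk, (hsp X).mp hXsp, _root_.map_neg, hk]
    · rintro ⟨k, hkE, rfl⟩
      constructor
      · rw [hsp]
        show τ (φ.toLinearMap k) = -(φ.toLinearMap k)
        rw [AlgHom.toLinearMap_apply, hτφ, (hmemn k).mp hkE, _root_.map_neg]
      · show φ k * β = β * φ k
        rw [← hφr, ← _root_.map_mul, ← _root_.map_mul]
        exact congrArg φ (mul_comm k (AdjoinRoot.root p))
  rw [hteq]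
  have hfin := LinearEquiv.finrank_eq (Submodule.equivMapOfInjective φ.toLinearMap hφinj Eneg)
  omega
end

section
/- Let F be a field of characteristic different from 2 and β ∈ sp_{2n}(F) arbitrary. Then {X ∈ sp_{2n}(F) : tr((X·Y − Y·X)·β) = 0 for all Y ∈ sp_{2n}(F)} = {X ∈ sp_{2n}(F) : X·β = β·X}; in other words, the radical of the alternating form (X,Y) ↦ tr([X,Y]·β) on sp_{2n}(F) is exactly the centralizer of β in sp_{2n}(F). -/
open Matrix

lemma J_mul_J (n : ℕ) (F : Type*) [Field F] : Jmat F n * Jmat F n = -1 := by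
  ext i k
  have hi := i.isLt
  have hk := k.isLt
  rw [mul_apply, Finset.sum_eq_single (⟨2*n-1-(i:ℕ), by omega⟩ : Fin (2*n))]
  · simp only [Jmat, of_apply, Fin.val_mk, Matrix.neg_apply]
    rw [if_pos (show (i:ℕ) + (2*n-1-(i:ℕ)) = 2*n-1 by omega)]
    by_cases hik : i = k
    · subst hik
      rw [if_pos (show (2*n-1-(i:ℕ)) + (i:ℕ) = 2*n-1 by omega), one_apply_eq]
      rcases Nat.lt_or_ge (i:ℕ) n with h | h
      · rw [if_pos h, if_neg (show ¬(2*n-1-(i:ℕ) < n) by omega)]; ring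
      · rw [if_neg (show ¬((i:ℕ) < n) by omega), if_pos (show 2*n-1-(i:ℕ) < n by omega)]; ring
    · have hik' : (i:ℕ) ≠ (k:ℕ) := fun h => hik (Fin.ext h)
      rw [if_neg (show ¬((2*n-1-(i:ℕ)) + (k:ℕ) = 2*n-1) by omega), one_apply_ne hik,
        mul_zero, neg_zero]
  · intro j _ hj
    simp only [Jmat, of_apply, Fin.val_mk]
    rw [if_neg]
    · exact zero_mul _
    · intro h
      apply hj
      apply Fin.ext
      show (j:ℕ) = 2*n-1-(i:ℕ)
      omega
  · intro h
    exact absurd (Finset.mem_univ _) h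

lemma J_transpose (n : ℕ) (F : Type*) [Field F] : (Jmat F n)ᵀ = -Jmat F n := by
  ext i j
  have hi := i.isLt
  have hj := j.isLt
  simp only [transpose_apply, Jmat, of_apply, Matrix.neg_apply]
  by_cases h : (j:ℕ) + (i:ℕ) = 2*n - 1
  · rw [if_pos h, if_pos (show (i:ℕ) + (j:ℕ) = 2*n-1 by omega)]
    rcases Nat.lt_or_ge (j:ℕ) n with h1 | h1
    · rw [if_pos h1, if_neg (show ¬((i:ℕ) < n) by omega)]; ring
    · rw [if_neg (show ¬((j:ℕ) < n) by omega), if_pos (show (i:ℕ) < n by omega)]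
  · rw [if_neg h, if_neg (show ¬((i:ℕ) + (j:ℕ) = 2*n-1) by omega), neg_zero]

section
variable {n : ℕ} {F : Type*} [Field F]

lemma sp_rel {X : Matrix (Fin (2*n)) (Fin (2*n)) F} (hX : X ∈ spSet n F) :
    Jmat F n * Xᵀ = -(X * Jmat F n) :=
  eq_neg_of_add_eq_zero_right hX

lemma sp_rel' {X : Matrix (Fin (2*n)) (Fin (2*n)) F} (hX : X ∈ spSet n F) :
    X * Jmat F n = -(Jmat F n * Xᵀ) :=
  eq_neg_of_add_eq_zero_left hX

/-- `J Z J = Zᵀ` for `Z ∈ sp`. -/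
lemma JZJ {Z : Matrix (Fin (2*n)) (Fin (2*n)) F} (hZ : Z ∈ spSet n F) :
    Jmat F n * Z * Jmat F n = Zᵀ := by
  have h := sp_rel' hZ
  calc Jmat F n * Z * Jmat F n
      = Jmat F n * (Z * Jmat F n) := by rw [mul_assoc]
    _ = Jmat F n * -(Jmat F n * Zᵀ) := by rw [h]
    _ = -(Jmat F n * Jmat F n) * Zᵀ := by rw [mul_neg, ← mul_assoc, neg_mul]
    _ = Zᵀ := by rw [J_mul_J]; simp

/-- sp is closed under commutator. -/
lemma comm_mem {A B : Matrix (Fin (2*n)) (Fin (2*n)) F}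
    (hA : A ∈ spSet n F) (hB : B ∈ spSet n F) : A * B - B * A ∈ spSet n F := by
  have hA' := sp_rel hA
  have hB' := sp_rel hB
  show (A * B - B * A) * Jmat F n + Jmat F n * (A * B - B * A)ᵀ = 0
  have e1 : Jmat F n * (Bᵀ * Aᵀ) = B * A * Jmat F n := by
    rw [← mul_assoc, hB', neg_mul, mul_assoc, hA', mul_neg, neg_neg, ← mul_assoc]
  have e2 : Jmat F n * (Aᵀ * Bᵀ) = A * B * Jmat F n := by
    rw [← mul_assoc, hA', neg_mul, mul_assoc, hB', mul_neg, neg_neg, ← mul_assoc]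
  rw [transpose_sub, transpose_mul, transpose_mul, mul_sub, e1, e2, sub_mul]
  abel

/-- symmetrization lands in sp. -/
lemma symm_mem (A : Matrix (Fin (2*n)) (Fin (2*n)) F) :
    A + Jmat F n * Aᵀ * Jmat F n ∈ spSet n F := by
  have hJJ := J_mul_J n F
  have hJT := J_transpose n F
  show (A + Jmat F n * Aᵀ * Jmat F n) * Jmat F n
      + Jmat F n * (A + Jmat F n * Aᵀ * Jmat F n)ᵀ = 0
  have e1 : Jmat F n * Aᵀ * Jmat F n * Jmat F n = -(Jmat F n * Aᵀ) := by
    rw [mul_assoc (Jmat F n * Aᵀ) (Jmat F n) (Jmat F n), hJJ, mul_neg_one]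
  have e2 : Jmat F n * (Jmat F n * Aᵀ * Jmat F n)ᵀ = -(A * Jmat F n) := by
    calc Jmat F n * (Jmat F n * Aᵀ * Jmat F n)ᵀ
        = Jmat F n * ((Jmat F n)ᵀ * (A * (Jmat F n)ᵀ)) := by
          rw [transpose_mul, transpose_mul, transpose_transpose]
      _ = Jmat F n * (Jmat F n * (A * Jmat F n)) := by
          rw [hJT]; simp only [neg_mul, mul_neg, neg_neg]
      _ = (Jmat F n * Jmat F n) * (A * Jmat F n) := by rw [← mul_assoc]
      _ = -(A * Jmat F n) := by rw [hJJ, neg_one_mul]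
  rw [transpose_add, mul_add, e2, add_mul, e1]
  abel

lemma trace_eq_zero_of_forall {Z : Matrix (Fin (2*n)) (Fin (2*n)) F}
    (h : ∀ A : Matrix (Fin (2*n)) (Fin (2*n)) F, (Z * A).trace = 0) : Z = 0 := by
  ext i j
  have h1 := h (Matrix.single j i 1)
  have h2 : (Z * Matrix.single j i (1:F)).trace = Z i j := by
    simp [trace, diag, mul_apply, Matrix.single, ite_and]
  rw [h2] at h1
  simpa using h1

end

/-- The radical of the alternating form `(X,Y) ↦ tr([X,Y]·β)` on `sp_{2n}(F)` is
exactly the centralizer of `β` in `sp_{2n}(F)`. -/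
theorem stmt6 (n : ℕ) (hn : 1 ≤ n) (F : Type*) [Field F] (h2 : (2 : F) ≠ 0)
    (β : Matrix (Fin (2*n)) (Fin (2*n)) F) (hβ : β ∈ spSet n F) :
    {X | X ∈ spSet n F ∧ ∀ Y ∈ spSet n F, ((X * Y - Y * X) * β).trace = 0}
      = {X | X ∈ spSet n F ∧ X * β = β * X} := by
  ext X
  simp only [Set.mem_setOf_eq]
  constructor
  · rintro ⟨hX, hrad⟩
    refine ⟨hX, ?_⟩
    set Z := X * β - β * X with hZdef
    have hZsp : Z ∈ spSet n F := comm_mem hX hβ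
    have key : ∀ Y ∈ spSet n F, (Z * Y).trace = 0 := by
      intro Y hY
      have h := hrad Y hY
      have e : ((X * Y - Y * X) * β).trace = -((Z * Y).trace) := by
        rw [hZdef, sub_mul, trace_sub, sub_mul, trace_sub,
          trace_mul_cycle X β Y, trace_mul_cycle β X Y, trace_mul_cycle Y β X]
        ring
      rw [e] at h
      exact neg_eq_zero.mp h
    have all : ∀ A : Matrix (Fin (2*n)) (Fin (2*n)) F, (Z * A).trace = 0 := by
      intro A
      have h := key _ (symm_mem (n := n) A)
      have hJZJ : Jmat F n * Z * Jmat F n = Zᵀ := JZJ hZsp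
      have e : (Z * (Jmat F n * Aᵀ * Jmat F n)).trace = (Z * A).trace := by
        calc (Z * (Jmat F n * Aᵀ * Jmat F n)).trace
            = (Jmat F n * (Z * (Jmat F n * Aᵀ))).trace := by
              rw [← mul_assoc, ← mul_assoc, trace_mul_comm]
          _ = ((Jmat F n * Z * Jmat F n) * Aᵀ).trace := by rw [← mul_assoc, ← mul_assoc]
          _ = (Zᵀ * Aᵀ).trace := by rw [hJZJ]
          _ = ((A * Z)ᵀ).trace := by rw [transpose_mul]
          _ = (A * Z).trace := trace_transpose _
          _ = (Z * A).trace := trace_mul_comm _ _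
      rw [mul_add, trace_add, e] at h
      have h2' : (2 : F) * (Z * A).trace = 0 := by linear_combination h
      exact (mul_eq_zero.mp h2').resolve_left h2
    exact sub_eq_zero.mp (trace_eq_zero_of_forall all)
  · rintro ⟨hX, hc⟩
    refine ⟨hX, fun Y hY => ?_⟩
    rw [sub_mul, trace_sub, mul_assoc Y X β, hc, ← mul_assoc, trace_mul_comm (Y * β) X,
      ← mul_assoc, sub_self]
end

section
/- Let F be a field of characteristic different from 2. For every i with 1 ≤ i ≤ n, the annihilator {Y ∈ sp_{2n}(F) : tr(X·Y) = 0 for all X ∈ u_i(F)} of u_i(F) in sp_{2n}(F) under the trace form equals p_i(F). -/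
open Matrix

/-- The span of the first `i` standard basis vectors of `F^{2n}`. -/
def firstSpan (n i : ℕ) (F : Type*) [Field F] : Submodule F (Fin (2*n) → F) :=
  Submodule.span F {v | ∃ j : Fin (2*n), (j : ℕ) < i ∧ v = Pi.single j (1 : F)}

/-- `p_i(F)`: elements of `sp_{2n}(F)` mapping the span of the first `i` standard basis
vectors into itself. -/
def pSet (n i : ℕ) (F : Type*) [Field F] : Set (Matrix (Fin (2*n)) (Fin (2*n)) F) :=
  {X | X ∈ spSet n F ∧ ∀ v ∈ firstSpan n i F, X.mulVec v ∈ firstSpan n i F}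

/-- `u_i(F)`: elements of `sp_{2n}(F)` supported in the blocks
`[[0,A,B,C],[0,0,0,*],[0,0,0,*],[0,0,0,0]]` with row/column block sizes
`(i, n−i, n−i, i)`. -/
def uSet (n i : ℕ) (F : Type*) [Field F] : Set (Matrix (Fin (2*n)) (Fin (2*n)) F) :=
  {X | X ∈ spSet n F ∧ ∀ a b : Fin (2*n), X a b ≠ 0 →
      (((a : ℕ) < i ∧ i ≤ (b : ℕ)) ∨ ((a : ℕ) < 2*n - i ∧ 2*n - i ≤ (b : ℕ)))}


section Aux
variable {n : ℕ} {F : Type*} [Field F]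

def σf (n : ℕ) (a : Fin (2*n)) : Fin (2*n) := ⟨2*n - 1 - (a:ℕ), by have := a.isLt; omega⟩

def εf (F : Type*) [Field F] (n : ℕ) (a : Fin (2*n)) : F := if (a:ℕ) < n then 1 else -1

lemma σf_val (a : Fin (2*n)) : (σf n a : ℕ) = 2*n - 1 - (a:ℕ) := rfl

lemma σσ (a : Fin (2*n)) : σf n (σf n a) = a := by
  have := a.isLt
  apply Fin.ext
  rw [σf_val, σf_val]
  omega

lemma σ_eq_iff {a b : Fin (2*n)} : σf n a = b ↔ a = σf n b := by
  constructor
  · rintro rfl; rw [σσ]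
  · rintro rfl; rw [σσ]

lemma ε_σ (a : Fin (2*n)) : εf F n (σf n a) = - εf F n a := by
  have := a.isLt
  unfold εf
  simp only [σf_val]
  by_cases h1 : 2*n - 1 - (a:ℕ) < n <;> by_cases h2 : (a:ℕ) < n <;> simp [h1, h2] <;> omega

lemma ε_sq (a : Fin (2*n)) : εf F n a * εf F n a = 1 := by
  unfold εf; split_ifs <;> ring

lemma Jmat_apply (a b : Fin (2*n)) : Jmat F n a b = if b = σf n a then εf F n a else 0 := by
  have ha := a.isLt
  have hb := b.isLt
  show (if (a:ℕ) + (b:ℕ) = 2*n - 1 then (if (a:ℕ) < n then (1:F) else -1) else 0) = _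
  by_cases h : (a:ℕ) + (b:ℕ) = 2*n - 1
  · have hbe : b = σf n a := Fin.ext (by rw [σf_val]; omega)
    rw [if_pos h, if_pos hbe]
    rfl
  · have hbe : b ≠ σf n a := by
      intro hc
      have := congrArg Fin.val hc
      rw [σf_val] at this
      omega
    rw [if_neg h, if_neg hbe]

lemma Jmat_apply' (a b : Fin (2*n)) : Jmat F n a b = if a = σf n b then -εf F n b else 0 := by
  rw [Jmat_apply]
  by_cases h : b = σf n a
  · rw [if_pos h, if_pos (σ_eq_iff.1 h.symm), h, ε_σ, neg_neg]
  · rw [if_neg h, if_neg (fun hc => h (σ_eq_iff.1 hc.symm))]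

lemma mem_spSet_iff {X : Matrix (Fin (2*n)) (Fin (2*n)) F} :
    X ∈ spSet n F ↔ ∀ a b : Fin (2*n), εf F n a * X b (σf n a) = εf F n b * X a (σf n b) := by
  unfold spSet
  rw [Set.mem_setOf_eq, ← Matrix.ext_iff]
  have key : ∀ a b : Fin (2*n), (X * Jmat F n + Jmat F n * Xᵀ) a b
      = εf F n a * X b (σf n a) - εf F n b * X a (σf n b) := by
    intro a b
    rw [Matrix.add_apply, Matrix.mul_apply, Matrix.mul_apply]
    have h1 : ∀ k : Fin (2*n), X a k * Jmat F n k b = if k = σf n b then -εf F n b * X a k else 0 := by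
      intro k
      rw [Jmat_apply']
      split_ifs <;> ring
    have h2 : ∀ k : Fin (2*n), Jmat F n a k * Xᵀ k b = if k = σf n a then εf F n a * X b k else 0 := by
      intro k
      rw [Jmat_apply, Matrix.transpose_apply]
      split_ifs <;> ring
    simp only [h1, h2, Finset.sum_ite_eq', Finset.mem_univ, if_true]
    ring
  constructor
  · intro h a b
    have := h a b
    rw [key, Matrix.zero_apply] at this
    exact (sub_eq_zero.1 this)
  · intro h a b
    rw [key, Matrix.zero_apply, h a b, sub_self]

lemma sp_flip {X : Matrix (Fin (2*n)) (Fin (2*n)) F} (hX : X ∈ spSet n F) (a b : Fin (2*n)) :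
    X (σf n b) (σf n a) = -(εf F n a * εf F n b) * X a b := by
  have h := (mem_spSet_iff.1 hX) a (σf n b)
  rw [σσ, ε_σ] at h
  calc X (σf n b) (σf n a) = εf F n a * (εf F n a * X (σf n b) (σf n a)) := by
        rw [← mul_assoc, ε_sq, one_mul]
    _ = εf F n a * (-εf F n b * X a b) := by rw [h]
    _ = -(εf F n a * εf F n b) * X a b := by ring

lemma firstSpan_apply {i : ℕ} {v : Fin (2*n) → F} (hv : v ∈ firstSpan n i F)
    {j : Fin (2*n)} (hj : i ≤ (j:ℕ)) : v j = 0 := by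
  have hle : firstSpan n i F ≤ LinearMap.ker (LinearMap.proj j : (Fin (2*n) → F) →ₗ[F] F) := by
    rw [firstSpan, Submodule.span_le]
    rintro w ⟨k, hk, rfl⟩
    simp only [SetLike.mem_coe, LinearMap.mem_ker, LinearMap.proj_apply]
    exact Pi.single_eq_of_ne (by intro h; have := congrArg Fin.val h; omega) 1
  simpa using hle hv

lemma mem_firstSpan {i : ℕ} {v : Fin (2*n) → F} (hv : ∀ j : Fin (2*n), i ≤ (j:ℕ) → v j = 0) :
    v ∈ firstSpan n i F := by
  have hrep : v = ∑ j : Fin (2*n), v j • (Pi.single j (1:F) : Fin (2*n) → F) := by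
    ext k
    simp [Pi.single_apply, Finset.sum_apply, mul_ite, Finset.sum_ite_eq]
  rw [hrep]
  apply Submodule.sum_mem
  intro j _
  by_cases hj : (j:ℕ) < i
  · exact Submodule.smul_mem _ _ (Submodule.subset_span ⟨j, hj, rfl⟩)
  · rw [hv j (by omega)]
    simp

end Aux
/-- The annihilator of `u_i(F)` in `sp_{2n}(F)` under the trace form equals `p_i(F)`. -/
theorem stmt8 (n : ℕ) (hn : 1 ≤ n) (F : Type*) [Field F] (h2 : (2 : F) ≠ 0) :
    ∀ i : ℕ, 1 ≤ i → i ≤ n →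
      {Y | Y ∈ spSet n F ∧ ∀ X ∈ uSet n i F, (X * Y).trace = 0} = pSet n i F := by
  intro i hi1 hin
  ext Y
  simp only [Set.mem_setOf_eq, pSet]
  constructor
  · rintro ⟨hYsp, htr⟩
    refine ⟨hYsp, ?_⟩
    have key : ∀ a b : Fin (2*n), (a:ℕ) < i → i ≤ (b:ℕ) → Y b a = 0 := by
      intro a b ha hb
      have hav := a.isLt
      have hbv := b.isLt
      set X : Matrix (Fin (2*n)) (Fin (2*n)) F := Matrix.of fun p q =>
        (if p = a then if q = b then (1:F) else 0 else 0)
        - εf F n a * εf F n b *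
          (if p = σf n b then if q = σf n a then (1:F) else 0 else 0) with hXdef
      have hXapp : ∀ p q, X p q =
          (if p = a then if q = b then (1:F) else 0 else 0)
          - εf F n a * εf F n b *
            (if p = σf n b then if q = σf n a then (1:F) else 0 else 0) := fun p q => rfl
      have hXsp : X ∈ spSet n F := by
        rw [mem_spSet_iff]
        intro p q
        rw [hXapp, hXapp]
        simp only [σ_eq_iff, σσ, ← ite_and]
        by_cases hAB : q = a ∧ p = σf n b
        · obtain ⟨hA, hB⟩ := hAB
          rw [if_pos (show q = a ∧ p = σf n b from ⟨hA, hB⟩),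
            if_pos (show p = σf n b ∧ q = a from ⟨hB, hA⟩), hA, hB, ε_σ]
          by_cases hC : a = σf n b
          · rw [if_pos (show a = σf n b ∧ σf n b = a from ⟨hC, hC.symm⟩),
              if_pos (show σf n b = a ∧ a = σf n b from ⟨hC.symm, hC⟩), hC, ε_σ]
          · rw [if_neg (show ¬(a = σf n b ∧ σf n b = a) from fun h => hC h.1),
              if_neg (show ¬(σf n b = a ∧ a = σf n b) from fun h => hC h.2)]
            linear_combination (εf F n b) * ε_sq (F := F) a
        · by_cases hCD : q = σf n b ∧ p = a
          · obtain ⟨hC, hD⟩ := hCD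
            rw [if_neg hAB, if_pos (show q = σf n b ∧ p = a from ⟨hC, hD⟩),
              if_pos (show p = a ∧ q = σf n b from ⟨hD, hC⟩),
              if_neg (show ¬(p = σf n b ∧ q = a) from fun h => hAB ⟨h.2, h.1⟩),
              hC, hD, ε_σ]
            linear_combination (-(εf F n b)) * ε_sq (F := F) a
          · rw [if_neg hAB, if_neg hCD,
              if_neg (show ¬(p = a ∧ q = σf n b) from fun h => hCD ⟨h.2, h.1⟩),
              if_neg (show ¬(p = σf n b ∧ q = a) from fun h => hAB ⟨h.2, h.1⟩)]
            ring
      have hXu : X ∈ uSet n i F := by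
        refine ⟨hXsp, ?_⟩
        intro p q hpq
        rw [hXapp] at hpq
        by_cases h1 : p = a ∧ q = b
        · exact Or.inl ⟨h1.1 ▸ ha, h1.2 ▸ hb⟩
        · by_cases h2' : p = σf n b ∧ q = σf n a
          · refine Or.inr ⟨?_, ?_⟩
            · rw [h2'.1, σf_val]; omega
            · rw [h2'.2, σf_val]; omega
          · exfalso
            apply hpq
            rcases not_and_or.1 h1 with h | h <;> rcases not_and_or.1 h2' with h' | h' <;>
              simp [h, h']
      have hterm : ∀ p q, X p q * Y q p =
          (if p = a then if q = b then Y q p else 0 else 0)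
          - εf F n a * εf F n b *
            (if p = σf n b then if q = σf n a then Y q p else 0 else 0) := by
        intro p q
        rw [hXapp]
        split_ifs <;> ring
      have hsum : ∀ (Z : Fin (2*n) → Fin (2*n) → F) (c d : Fin (2*n)),
          (∑ p : Fin (2*n), ∑ q : Fin (2*n),
            (if p = c then if q = d then Z q p else 0 else 0)) = Z d c := by
        intro Z c d
        rw [Finset.sum_eq_single c]
        · simp [Finset.sum_ite_eq']
        · intro x _ hx; simp [hx]
        · intro h; exact absurd (Finset.mem_univ c) h
      have htrace0 : (X * Y).trace = ∑ p : Fin (2*n), ∑ q : Fin (2*n), X p q * Y q p := by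
        simp [Matrix.trace, Matrix.diag, Matrix.mul_apply]
      have htrace : (X * Y).trace
          = Y b a - εf F n a * εf F n b * Y (σf n a) (σf n b) := by
        rw [htrace0]
        simp only [hterm, Finset.sum_sub_distrib, ← Finset.mul_sum]
        rw [hsum (fun q p => Y q p) a b, hsum (fun q p => Y q p) (σf n b) (σf n a)]
      have ht := htr X hXu
      rw [htrace] at ht
      have hflip : Y (σf n a) (σf n b) = -(εf F n b * εf F n a) * Y b a := sp_flip hYsp b a
      rw [hflip] at ht
      have h2Y : (2:F) * Y b a = 0 := by
        have hsa := ε_sq (F := F) (n := n) a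
        have hsb := ε_sq (F := F) (n := n) b
        linear_combination ht - (εf F n b * εf F n b * Y b a) * hsa - (Y b a) * hsb
      exact (mul_eq_zero.1 h2Y).resolve_left h2
    intro v hv
    apply mem_firstSpan
    intro j hj
    show ∑ k, Y j k * v k = 0
    apply Finset.sum_eq_zero
    intro k _
    by_cases hk : (k:ℕ) < i
    · rw [key k j hk hj, zero_mul]
    · rw [firstSpan_apply hv (by omega), mul_zero]
  · rintro ⟨hYsp, hmaps⟩
    refine ⟨hYsp, ?_⟩
    have key1 : ∀ a b : Fin (2*n), (a:ℕ) < i → i ≤ (b:ℕ) → Y b a = 0 := by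
      intro a b ha hb
      have hmem : Y.mulVec (Pi.single a (1:F)) ∈ firstSpan n i F :=
        hmaps _ (Submodule.subset_span ⟨a, ha, rfl⟩)
      have := firstSpan_apply hmem hb
      rw [Matrix.mulVec_single] at this
      simpa using this
    have key2 : ∀ a b : Fin (2*n), (a:ℕ) < 2*n - i → 2*n - i ≤ (b:ℕ) → Y b a = 0 := by
      intro a b ha hb
      have hav := a.isLt
      have hbv := b.isLt
      have h := sp_flip hYsp (σf n a) (σf n b)
      rw [σσ, σσ] at h
      rw [h, key1 (σf n b) (σf n a) (by rw [σf_val]; omega) (by rw [σf_val]; omega), mul_zero]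
    intro X hX
    rw [Matrix.trace]
    apply Finset.sum_eq_zero
    intro p _
    rw [Matrix.diag]
    rw [Matrix.mul_apply]
    apply Finset.sum_eq_zero
    intro q _
    by_cases hx : X p q = 0
    · rw [hx, zero_mul]
    · rcases hX.2 p q hx with ⟨h1, h2'⟩ | ⟨h1, h2'⟩
      · rw [key1 p q h1 h2', mul_zero]
      · rw [key2 p q h1 h2', mul_zero]
end

section
/- Let r > 1 and write r = l + l' with l the smallest integer such that 0 < l' ≤ l, let β̄ denote the reduction of β modulo ϖ^r, and set H_r = {h ∈ Sp_{2n}(O/ϖ^r O) : h·β̄ ≡ β̄·h (mod ϖ^{l'})}. Then for every g ∈ Sp_{2n}(O/ϖ^r O), the intersection U(O/ϖ^r O) ∩ g·H_r·g⁻¹ equals {u ∈ U(O/ϖ^r O) : u ≡ 1_{2n} (mod ϖ^{l'})}. -/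
open Matrix
open Polynomial

/-- `U(R)`: upper triangular matrices in `Sp_{2n}(R)` with all diagonal entries `1`. -/
def USet (n : ℕ) (R : Type*) [CommRing R] : Set (Matrix (Fin (2*n)) (Fin (2*n)) R) :=
  {u | u ∈ SpSet n R ∧ (∀ a b : Fin (2*n), (b : ℕ) < (a : ℕ) → u a b = 0) ∧
    ∀ a : Fin (2*n), u a a = 1}

section Helpers

variable {m : Type*} [Fintype m] [DecidableEq m] {R : Type*} [CommRing R]

/-- Characteristic polynomial is invariant under conjugation. -/
lemma my_charpoly_conj (P Q A : Matrix m m R) (h : P * Q = 1) :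
    (P * A * Q).charpoly = A.charpoly := by
  have hmapPQ : (C : R →+* R[X]).mapMatrix P * (C : R →+* R[X]).mapMatrix Q = 1 := by
    rw [← _root_.map_mul, h, _root_.map_one]
  have hchm : charmatrix (P * A * Q) =
      (C : R →+* R[X]).mapMatrix P * charmatrix A * (C : R →+* R[X]).mapMatrix Q := by
    unfold charmatrix
    rw [Matrix.mul_sub, Matrix.sub_mul]
    congr 1
    · have : (C : R →+* R[X]).mapMatrix P * Matrix.scalar m (X : R[X]) =
          Matrix.scalar m (X : R[X]) * (C : R →+* R[X]).mapMatrix P := by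
        rw [Matrix.scalar_commute]
        intro r'
        exact Commute.all _ _
      rw [this, Matrix.mul_assoc, hmapPQ, Matrix.mul_one]
    · rw [_root_.map_mul, _root_.map_mul]
  unfold Matrix.charpoly
  rw [hchm, Matrix.det_mul, Matrix.det_mul]
  have hdet : ((C : R →+* R[X]).mapMatrix P).det * ((C : R →+* R[X]).mapMatrix Q).det = 1 := by
    rw [← Matrix.det_mul, hmapPQ, Matrix.det_one]
  calc ((C : R →+* R[X]).mapMatrix P).det * (charmatrix A).det *
        ((C : R →+* R[X]).mapMatrix Q).det
      = ((C : R →+* R[X]).mapMatrix P).det * ((C : R →+* R[X]).mapMatrix Q).det *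
        (charmatrix A).det := by ring
    _ = (charmatrix A).det := by rw [hdet, one_mul]

lemma entries_mem_mul_left (I : Ideal R) (A M : Matrix m m R) (hM : ∀ a b, M a b ∈ I) :
    ∀ a b, (A * M) a b ∈ I := fun a b => by
  rw [Matrix.mul_apply]; exact Ideal.sum_mem _ fun c _ => I.mul_mem_left _ (hM c b)

lemma entries_mem_mul_right (I : Ideal R) (A M : Matrix m m R) (hM : ∀ a b, M a b ∈ I) :
    ∀ a b, (M * A) a b ∈ I := fun a b => by
  rw [Matrix.mul_apply]; exact Ideal.sum_mem _ fun c _ => I.mul_mem_right _ (hM a c)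

lemma my_sum_mulVec {ι : Type*} (s : Finset ι) (f : ι → Matrix m m R) (v : m → R) :
    (∑ i ∈ s, f i) *ᵥ v = ∑ i ∈ s, (f i) *ᵥ v := by
  induction s using Finset.cons_induction with
  | empty => simp [Matrix.zero_mulVec]
  | cons a s ha ih => simp [Finset.sum_cons, Matrix.add_mulVec, ih]

end Helpers

/-- Over a field, a singular matrix commuting with a matrix whose characteristic
polynomial is irreducible must be zero. -/
lemma centralizer_singular_eq_zero {F : Type*} [Field F] {m : ℕ} (hm : 0 < m)
    (B X : Matrix (Fin m) (Fin m) F) (hB : Irreducible B.charpoly)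
    (hcomm : X * B = B * X) (hdet : X.det = 0) : X = 0 := by
  obtain ⟨v, hv0, hXv⟩ := (Matrix.exists_mulVec_eq_zero_iff).mpr hdet
  set A : Ideal (Polynomial F) :=
    { carrier := {p | (aeval B p) *ᵥ v = 0}
      add_mem' := by
        intro p q hp hq
        show (aeval B (p + q)) *ᵥ v = 0
        rw [map_add, Matrix.add_mulVec, hp, hq, add_zero]
      zero_mem' := by
        show (aeval B (0 : F[X])) *ᵥ v = 0
        rw [map_zero, Matrix.zero_mulVec]
      smul_mem' := by
        intro q p hp
        show (aeval B (q * p)) *ᵥ v = 0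
        rw [_root_.map_mul, ← Matrix.mulVec_mulVec, hp, Matrix.mulVec_zero] } with hA
  have hchar : B.charpoly ∈ A := by
    show (aeval B B.charpoly) *ᵥ v = 0
    rw [Matrix.aeval_self_charpoly, Matrix.zero_mulVec]
  have hAne : A ≠ ⊤ := by
    intro h
    have h1 : (1 : F[X]) ∈ A := h ▸ Submodule.mem_top
    have : (aeval B (1 : F[X])) *ᵥ v = 0 := h1
    rw [_root_.map_one, Matrix.one_mulVec] at this
    exact hv0 this
  have hmax := PrincipalIdealRing.isMaximal_of_irreducible hB
  have hle : Ideal.span {B.charpoly} ≤ A := by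
    rw [Ideal.span_le, Set.singleton_subset_iff]; exact hchar
  have hAeq : A = Ideal.span {B.charpoly} := (hmax.eq_of_le hAne hle).symm
  have hdeg : B.charpoly.natDegree = m := by
    rw [Matrix.charpoly_natDegree_eq_dim, Fintype.card_fin]
  set φ : (Fin m → F) →ₗ[F] (Fin m → F) :=
    { toFun := fun c => ∑ j : Fin m, c j • ((B ^ (j : ℕ)) *ᵥ v)
      map_add' := fun c d => by
        simp [add_smul, Finset.sum_add_distrib]
      map_smul' := fun a c => by
        simp [Finset.smul_sum, smul_smul] } with hφ
  have hinj : Function.Injective φ := by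
    rw [injective_iff_map_eq_zero]
    intro c hc
    set p : F[X] := (((degreeLTEquiv F m).symm c : Polynomial.degreeLT F m) : F[X]) with hpdef
    have hpmem : p ∈ Polynomial.degreeLT F m := ((degreeLTEquiv F m).symm c).2
    have hpdeg : p.degree < (m : ℕ) := Polynomial.mem_degreeLT.mp hpmem
    have hpnat : p.natDegree < m := by
      rcases eq_or_ne p 0 with h | h
      · simpa [h] using hm
      · exact (Polynomial.natDegree_lt_iff_degree_lt h).mpr hpdeg
    have hcoeff : ∀ j : Fin m, p.coeff j = c j := by
      intro j
      have := congr_fun ((degreeLTEquiv F m).apply_symm_apply c) j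
      exact this
    have hpA : p ∈ A := by
      show (aeval B p) *ᵥ v = 0
      rw [Polynomial.aeval_eq_sum_range' hpnat, my_sum_mulVec]
      have : ∑ i ∈ Finset.range m, (p.coeff i • B ^ i) *ᵥ v
          = ∑ i ∈ Finset.range m, p.coeff i • ((B ^ i) *ᵥ v) := by
        refine Finset.sum_congr rfl fun i _ => ?_
        rw [Matrix.smul_mulVec]
      rw [this, ← Fin.sum_univ_eq_sum_range (fun i => p.coeff i • ((B ^ i) *ᵥ v)) m]
      have : ∑ j : Fin m, p.coeff j • ((B ^ (j : ℕ)) *ᵥ v)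
          = ∑ j : Fin m, c j • ((B ^ (j : ℕ)) *ᵥ v) := by
        refine Finset.sum_congr rfl fun j _ => ?_
        rw [hcoeff j]
      rw [this]
      exact hc
    rw [hAeq, Ideal.mem_span_singleton] at hpA
    have hp0 : p = 0 := by
      by_contra h
      have := Polynomial.natDegree_le_of_dvd hpA h
      omega
    funext j
    rw [← hcoeff j, hp0]; simp
  have hsurj : Function.Surjective φ := LinearMap.injective_iff_surjective.mp hinj
  have hkill : ∀ w, X *ᵥ w = 0 := by
    intro w
    obtain ⟨c, rfl⟩ := hsurj w
    show X *ᵥ (∑ j : Fin m, c j • ((B ^ (j : ℕ)) *ᵥ v)) = 0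
    have : X *ᵥ (∑ j : Fin m, c j • ((B ^ (j : ℕ)) *ᵥ v))
        = ∑ j : Fin m, c j • (X *ᵥ ((B ^ (j : ℕ)) *ᵥ v)) := by
      rw [show (∑ j : Fin m, c j • ((B ^ (j : ℕ)) *ᵥ v)) =
        ∑ j : Fin m, ((c j • (B ^ (j : ℕ))) *ᵥ v) from
          Finset.sum_congr rfl fun j _ => (Matrix.smul_mulVec _ _ _).symm,
        ← my_sum_mulVec, Matrix.mulVec_mulVec, Matrix.mul_sum]
      rw [my_sum_mulVec]
      refine Finset.sum_congr rfl fun j _ => ?_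
      rw [Matrix.mul_smul, Matrix.smul_mulVec, Matrix.mulVec_mulVec]
    rw [this]
    have hzero : ∀ j : Fin m, X *ᵥ ((B ^ (j : ℕ)) *ᵥ v) = 0 := by
      intro j
      have hcj : X * B ^ (j : ℕ) = B ^ (j : ℕ) * X := ((Commute.pow_right hcomm (j : ℕ)))
      rw [Matrix.mulVec_mulVec, hcj, ← Matrix.mulVec_mulVec, hXv, Matrix.mulVec_zero]
    simp [hzero]
  ext a b
  have := congr_fun (hkill (Pi.single b 1)) a
  rw [Matrix.mulVec_single] at this
  simpa using this

/-- Membership in the ideal generated by `mk (ϖ^s)` in `O/(ϖ^r)` is divisibility upstairs. -/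
lemma mk_mem_span_pow_iff {O : Type*} [CommRing O] [IsDomain O]
    {ϖ : O} {r s : ℕ} (hsr : s ≤ r) (a : O) :
    Ideal.Quotient.mk (Ideal.span {ϖ^r}) a ∈
      Ideal.span {Ideal.Quotient.mk (Ideal.span {ϖ^r}) (ϖ^s)} ↔ ϖ^s ∣ a := by
  constructor
  · intro h
    rw [Ideal.mem_span_singleton] at h
    obtain ⟨c, hc⟩ := h
    obtain ⟨c₀, rfl⟩ := Ideal.Quotient.mk_surjective c
    rw [← _root_.map_mul, Ideal.Quotient.eq, Ideal.mem_span_singleton] at hc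
    obtain ⟨d, hd⟩ := hc
    refine ⟨c₀ + ϖ^(r-s) * d, ?_⟩
    have hpow : ϖ ^ r = ϖ ^ s * ϖ ^ (r - s) := by rw [← pow_add]; congr 1; omega
    have : a = ϖ^s * c₀ + ϖ^r * d := by linear_combination hd
    rw [this, hpow]; ring
  · rintro ⟨c, rfl⟩
    rw [_root_.map_mul]
    exact Ideal.mem_span_singleton.mpr ⟨_, rfl⟩

/-- The key reduction: a unipotent upper-triangular matrix over `O/(ϖ^r)` that
almost-commutes (mod `ϖ^{l'}`) with a conjugate of a matrix with residually
irreducible characteristic polynomial is congruent to `1` mod `ϖ^{l'}`. -/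
lemma key_reduction {m : ℕ} (hm : 0 < m)
    {O : Type*} [CommRing O] [IsDomain O] [IsDiscreteValuationRing O]
    {ϖ : O} (hϖ : Irreducible ϖ)
    {r l' : ℕ} (hl' : 0 < l') (hl'r : l' < r)
    (B : Matrix (Fin m) (Fin m) O)
    (hirr : Irreducible ((B.map (Ideal.Quotient.mk (Ideal.span {ϖ}))).charpoly))
    (G G' u : Matrix (Fin m) (Fin m) (O ⧸ Ideal.span {ϖ^r}))
    (hGG' : G * G' = 1)
    (hupper : ∀ a b : Fin m, (b:ℕ) ≤ (a:ℕ) → (u - 1) a b = 0)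
    (hcomm : ∀ a b : Fin m,
      (u * (G * B.map (Ideal.Quotient.mk (Ideal.span {ϖ^r})) * G')
        - (G * B.map (Ideal.Quotient.mk (Ideal.span {ϖ^r})) * G') * u) a b
        ∈ Ideal.span {Ideal.Quotient.mk (Ideal.span {ϖ^r}) (ϖ^l')}) :
    ∀ a b, (u - 1) a b ∈ Ideal.span {Ideal.Quotient.mk (Ideal.span {ϖ^r}) (ϖ^l')} := by
  set mkr := Ideal.Quotient.mk (Ideal.span {ϖ^r}) with hmkr
  set mk1 := Ideal.Quotient.mk (Ideal.span {ϖ}) with hmk1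
  have hr0 : 0 < r := lt_trans hl' hl'r
  -- the factor map
  have hle : Ideal.span {ϖ^r} ≤ Ideal.span {ϖ} := by
    rw [Ideal.span_le, Set.singleton_subset_iff]
    exact Ideal.mem_span_singleton.mpr (dvd_pow_self ϖ (by omega))
  have hfac : ∀ x : O, mk1 x = Ideal.Quotient.factor hle (mkr x) :=
    fun x => (Ideal.Quotient.factor_mk hle x).symm
  -- lifts
  have hsur := Ideal.Quotient.mk_surjective (I := Ideal.span {ϖ^r})
  choose G₀f hG₀ using fun (p : Fin m × Fin m) => hsur (G p.1 p.2)
  choose G₀'f hG₀' using fun (p : Fin m × Fin m) => hsur (G' p.1 p.2)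
  choose U₀f hU₀ using fun (p : Fin m × Fin m) => hsur (u p.1 p.2)
  set G₀ : Matrix (Fin m) (Fin m) O := Matrix.of fun a b => G₀f (a, b) with hG₀def
  set G₀' : Matrix (Fin m) (Fin m) O := Matrix.of fun a b => G₀'f (a, b) with hG₀'def
  set U₀ : Matrix (Fin m) (Fin m) O := Matrix.of fun a b => U₀f (a, b) with hU₀def
  have hmapG : G₀.map mkr = G := by ext a b; exact hG₀ (a, b)
  have hmapG' : G₀'.map mkr = G' := by ext a b; exact hG₀' (a, b)
  have hmapU : U₀.map mkr = u := by ext a b; exact hU₀ (a, b)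
  set B₀ : Matrix (Fin m) (Fin m) O := G₀ * B * G₀' with hB₀def
  -- matrix map as ring hom
  have hmap_mul : ∀ (M N : Matrix (Fin m) (Fin m) O),
      (M * N).map mkr = M.map mkr * N.map mkr := fun M N => by
    simpa [RingHom.mapMatrix_apply] using _root_.map_mul mkr.mapMatrix M N
  have hmap_sub : ∀ (M N : Matrix (Fin m) (Fin m) O),
      (M - N).map mkr = M.map mkr - N.map mkr := fun M N => by
    simpa [RingHom.mapMatrix_apply] using _root_.map_sub mkr.mapMatrix M N
  have hmap_one : (1 : Matrix (Fin m) (Fin m) O).map mkr = 1 := by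
    simpa [RingHom.mapMatrix_apply] using _root_.map_one mkr.mapMatrix
  -- the lifted commutator is divisible by ϖ^l'
  have hD : ∀ a b, ϖ^l' ∣ (U₀ * B₀ - B₀ * U₀) a b := by
    intro a b
    rw [← mk_mem_span_pow_iff (le_of_lt hl'r)]
    have hmm : (U₀ * B₀ - B₀ * U₀).map ⇑mkr
        = u * (G * B.map ⇑mkr * G') - (G * B.map ⇑mkr * G') * u := by
      rw [hmap_sub (U₀ * B₀) (B₀ * U₀), hmap_mul U₀ B₀, hmap_mul B₀ U₀, hB₀def,
        hmap_mul (G₀ * B) G₀', hmap_mul G₀ B, hmapU, hmapG, hmapG']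
    have : mkr ((U₀ * B₀ - B₀ * U₀) a b)
        = (u * (G * B.map ⇑mkr * G') - (G * B.map ⇑mkr * G') * u) a b := by
      rw [← hmm]; rfl
    rw [this]
    exact hcomm a b
  -- the lift of u-1 is ϖ^r-divisible below and on the diagonal
  have hlow : ∀ a b : Fin m, (b:ℕ) ≤ (a:ℕ) → ϖ^r ∣ (U₀ - 1) a b := by
    intro a b hba
    rw [← Ideal.mem_span_singleton (α := O)]
    rw [← Ideal.Quotient.eq_zero_iff_mem (I := Ideal.span {ϖ^r})]
    have h0 : ((U₀ - 1).map ⇑mkr) a b = 0 := by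
      rw [hmap_sub U₀ 1, hmap_one, hmapU]
      exact hupper a b hba
    exact h0
  -- field structure on the residue field
  haveI : (Ideal.span {ϖ}).IsMaximal := PrincipalIdealRing.isMaximal_of_irreducible hϖ
  letI : Field (O ⧸ Ideal.span {ϖ}) := Ideal.Quotient.field _
  -- reductions mod ϖ
  have hmap1_mul : ∀ (M N : Matrix (Fin m) (Fin m) O),
      (M * N).map mk1 = M.map mk1 * N.map mk1 := fun M N => by
    simpa [RingHom.mapMatrix_apply] using _root_.map_mul mk1.mapMatrix M N
  have hPQ1 : (G₀.map mk1) * (G₀'.map mk1) = 1 := by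
    rw [← hmap1_mul]
    have h2 : (G₀ * G₀').map mkr = 1 := by rw [hmap_mul, hmapG, hmapG', hGG']
    have : (G₀ * G₀').map mk1 = ((G₀ * G₀').map mkr).map (Ideal.Quotient.factor hle) := by
      ext a b; exact hfac _
    rw [this, h2]
    exact Matrix.map_one _ (map_zero _) (_root_.map_one _)
  have hirrB₀ : Irreducible ((B₀.map mk1).charpoly) := by
    have : B₀.map mk1 = (G₀.map mk1) * (B.map mk1) * (G₀'.map mk1) := by
      rw [hB₀def, hmap1_mul, hmap1_mul]
    rw [this, my_charpoly_conj _ _ _ hPQ1]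
    exact hirr
  -- main induction
  have main : ∀ k, k ≤ l' → ∀ a b, ϖ^k ∣ (U₀ - 1) a b := by
    intro k
    induction k with
    | zero => intro _ a b; simpa using one_dvd _
    | succ k ih =>
      intro hk a b
      have hk' : k ≤ l' := by omega
      have hkl : k < l' := by omega
      choose Xf hXf using fun (p : Fin m × Fin m) => ih hk' p.1 p.2
      set Xm : Matrix (Fin m) (Fin m) O := Matrix.of fun a b => Xf (a, b) with hXmdef
      have hU1 : U₀ - 1 = (ϖ^k : O) • Xm := by
        ext i j
        rw [Matrix.smul_apply, smul_eq_mul]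
        exact hXf (i, j)
      have hcommX : ∀ i j, ϖ ∣ (Xm * B₀ - B₀ * Xm) i j := by
        intro i j
        have hD' := hD i j
        have heq : U₀ * B₀ - B₀ * U₀ = (ϖ^k : O) • (Xm * B₀ - B₀ * Xm) := by
          have : U₀ * B₀ - B₀ * U₀ = (U₀ - 1) * B₀ - B₀ * (U₀ - 1) := by
            rw [Matrix.sub_mul, Matrix.mul_sub, Matrix.one_mul, Matrix.mul_one,
              sub_sub_sub_cancel_right]
          rw [this, hU1, Matrix.smul_mul, Matrix.mul_smul, smul_sub]
        rw [heq] at hD'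
        rw [Matrix.smul_apply, smul_eq_mul] at hD'
        obtain ⟨z, hz⟩ := hD'
        have hpow : ϖ ^ l' = ϖ ^ k * ϖ ^ (l' - k) := by rw [← pow_add]; congr 1; omega
        rw [hpow] at hz
        rw [mul_assoc (ϖ ^ k) (ϖ ^ (l' - k)) z] at hz
        have := mul_left_cancel₀ (pow_ne_zero k hϖ.ne_zero) hz
        exact this ▸ Dvd.dvd.mul_right (dvd_pow_self ϖ (by omega)) z
      have hXlow : ∀ i j : Fin m, (j:ℕ) ≤ (i:ℕ) → ϖ ∣ Xm i j := by
        intro i j hji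
        have := hlow i j hji
        rw [hU1, Matrix.smul_apply, smul_eq_mul] at this
        obtain ⟨z, hz⟩ := this
        have hpow : ϖ ^ r = ϖ ^ k * ϖ ^ (r - k) := by rw [← pow_add]; congr 1; omega
        rw [hpow] at hz
        rw [mul_assoc (ϖ ^ k) (ϖ ^ (r - k)) z] at hz
        have := mul_left_cancel₀ (pow_ne_zero k hϖ.ne_zero) hz
        exact this ▸ Dvd.dvd.mul_right (dvd_pow_self ϖ (by omega)) z
      -- pass to the residue field
      set Xb : Matrix (Fin m) (Fin m) (O ⧸ Ideal.span {ϖ}) := Xm.map mk1 with hXbdef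
      set Bb : Matrix (Fin m) (Fin m) (O ⧸ Ideal.span {ϖ}) := B₀.map mk1 with hBbdef
      have hXbcomm : Xb * Bb = Bb * Xb := by
        have hsub : (Xm * B₀ - B₀ * Xm).map mk1 = Xb * Bb - Bb * Xb := by
          have h1 : (Xm * B₀ - B₀ * Xm).map mk1
              = (Xm * B₀).map mk1 - (B₀ * Xm).map mk1 := by
            simpa [RingHom.mapMatrix_apply] using _root_.map_sub mk1.mapMatrix (Xm * B₀) (B₀ * Xm)
          rw [h1, hmap1_mul Xm B₀, hmap1_mul B₀ Xm]
        have hz : (Xm * B₀ - B₀ * Xm).map mk1 = 0 := by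
          ext i j
          show mk1 ((Xm * B₀ - B₀ * Xm) i j) = 0
          rw [Ideal.Quotient.eq_zero_iff_mem, Ideal.mem_span_singleton]
          exact hcommX i j
        rw [hsub] at hz
        exact sub_eq_zero.mp hz
      have hXbdet : Xb.det = 0 := by
        have htri : Xb.BlockTriangular id := by
          intro i j hij
          show mk1 (Xm i j) = 0
          rw [Ideal.Quotient.eq_zero_iff_mem, Ideal.mem_span_singleton]
          exact hXlow i j (le_of_lt (by exact_mod_cast hij))
        rw [Matrix.det_of_upperTriangular htri]
        refine Finset.prod_eq_zero (Finset.mem_univ (⟨0, hm⟩ : Fin m)) ?_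
        show mk1 (Xm _ _) = 0
        rw [Ideal.Quotient.eq_zero_iff_mem, Ideal.mem_span_singleton]
        exact hXlow _ _ le_rfl
      have hXb0 : Xb = 0 := centralizer_singular_eq_zero hm Bb Xb hirrB₀ hXbcomm hXbdet
      have hXdvd : ϖ ∣ Xm a b := by
        have hab : Xb a b = 0 := by rw [hXb0]; rfl
        have : mk1 (Xm a b) = 0 := hab
        rw [Ideal.Quotient.eq_zero_iff_mem, Ideal.mem_span_singleton] at this
        exact this
      obtain ⟨c, hc⟩ := hXdvd
      refine ⟨c, ?_⟩
      rw [hU1, Matrix.smul_apply, smul_eq_mul, hc, pow_succ]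
      ring
  intro a b
  have hfin := main l' le_rfl a b
  have := (mk_mem_span_pow_iff (le_of_lt hl'r) ((U₀ - 1) a b)).mpr hfin
  have heq : mkr ((U₀ - 1) a b) = (u - 1) a b := by
    have h1 : ((U₀ - 1).map ⇑mkr) a b = (u - 1) a b := by
      rw [hmap_sub U₀ 1, hmap_one, hmapU]
    exact h1
  rwa [heq] at this

lemma sp_mul_mem {n : ℕ} {R : Type*} [CommRing R] {a b : Matrix (Fin (2*n)) (Fin (2*n)) R}
    (ha : a ∈ SpSet n R) (hb : b ∈ SpSet n R) : a * b ∈ SpSet n R := by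
  obtain ⟨had, haJ⟩ := ha
  obtain ⟨hbd, hbJ⟩ := hb
  refine ⟨by rw [Matrix.det_mul]; exact had.mul hbd, ?_⟩
  rw [Matrix.transpose_mul]
  calc a * b * Jmat R n * (bᵀ * aᵀ) = a * (b * Jmat R n * bᵀ) * aᵀ := by
        simp only [Matrix.mul_assoc]
    _ = a * Jmat R n * aᵀ := by rw [hbJ]
    _ = Jmat R n := haJ

lemma sp_inv_mem {n : ℕ} {R : Type*} [CommRing R] {a : Matrix (Fin (2*n)) (Fin (2*n)) R}
    (ha : a ∈ SpSet n R) : a⁻¹ ∈ SpSet n R := by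
  obtain ⟨had, haJ⟩ := ha
  refine ⟨Matrix.isUnit_nonsing_inv_det a had, ?_⟩
  have h1 : a * a⁻¹ = 1 := Matrix.mul_nonsing_inv a had
  have h2 : a⁻¹ * a = 1 := Matrix.nonsing_inv_mul a had
  have h3 : aᵀ * (aᵀ)⁻¹ = 1 := Matrix.mul_nonsing_inv aᵀ (by rwa [Matrix.det_transpose])
  calc a⁻¹ * Jmat R n * (a⁻¹)ᵀ = a⁻¹ * Jmat R n * (aᵀ)⁻¹ := by rw [Matrix.transpose_nonsing_inv]
    _ = a⁻¹ * (a * Jmat R n * aᵀ) * (aᵀ)⁻¹ := by rw [haJ]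
    _ = (a⁻¹ * a) * Jmat R n * (aᵀ * (aᵀ)⁻¹) := by simp only [Matrix.mul_assoc]
    _ = Jmat R n := by rw [h2, h3, Matrix.one_mul, Matrix.mul_one]


/-- For every `g ∈ Sp_{2n}(O/ϖ^r O)`, `U(O/ϖ^r O) ∩ g·H_r·g⁻¹` equals
`{u ∈ U(O/ϖ^r O) : u ≡ 1 (mod ϖ^{l'})}`. -/
theorem stmt16 (n : ℕ) (hn : 1 ≤ n)
    (O : Type*) [CommRing O] [IsDomain O] [IsDiscreteValuationRing O]
    (ϖ : O) (hϖ : Irreducible ϖ) [IsAdicComplete (Ideal.span {ϖ}) O]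
    [Finite (O ⧸ Ideal.span {ϖ})] (q : ℕ)
    (hq : Nat.card (O ⧸ Ideal.span {ϖ}) = q) (hodd : Odd q)
    (β : Matrix (Fin (2*n)) (Fin (2*n)) O) (hβ : β ∈ spSet n O)
    (hirr : Irreducible (β.charpoly.map (Ideal.Quotient.mk (Ideal.span {ϖ}))))
    (r l l' : ℕ) (hr : 1 < r) (hrll : r = l + l') (hl' : 0 < l') (hl'l : l' ≤ l)
    (hlmin : l ≤ l' + 1) :
    ∀ g ∈ SpSet n (O ⧸ Ideal.span {ϖ^r}),
      USet n (O ⧸ Ideal.span {ϖ^r}) ∩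
        {x | ∃ h ∈ {h | h ∈ SpSet n (O ⧸ Ideal.span {ϖ^r}) ∧
            ∀ a b : Fin (2*n),
              (h * β.map (Ideal.Quotient.mk (Ideal.span {ϖ^r}))
                - β.map (Ideal.Quotient.mk (Ideal.span {ϖ^r})) * h) a b
                ∈ Ideal.span {Ideal.Quotient.mk (Ideal.span {ϖ^r}) (ϖ^l')}},
          x = g * h * g⁻¹}
      = {u | u ∈ USet n (O ⧸ Ideal.span {ϖ^r}) ∧
          ∀ a b : Fin (2*n),
            (u - 1) a b ∈ Ideal.span {Ideal.Quotient.mk (Ideal.span {ϖ^r}) (ϖ^l')}} := by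
  intro g hg
  obtain ⟨hgdet, hgJ⟩ := hg
  set mkr := Ideal.Quotient.mk (Ideal.span {ϖ^r}) with hmkrdef
  set I : Ideal (O ⧸ Ideal.span {ϖ^r}) := Ideal.span {mkr (ϖ^l')} with hIdef
  have hginv : g * g⁻¹ = 1 := Matrix.mul_nonsing_inv g hgdet
  have hinvg : g⁻¹ * g = 1 := Matrix.nonsing_inv_mul g hgdet
  have hgSp : g ∈ SpSet n (O ⧸ Ideal.span {ϖ^r}) := ⟨hgdet, hgJ⟩
  have hcl : ∀ X : Matrix (Fin (2*n)) (Fin (2*n)) (O ⧸ Ideal.span {ϖ^r}),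
      g⁻¹ * (g * X) = X := fun X => by rw [← Matrix.mul_assoc, hinvg, Matrix.one_mul]
  have hcl' : ∀ X : Matrix (Fin (2*n)) (Fin (2*n)) (O ⧸ Ideal.span {ϖ^r}),
      g * (g⁻¹ * X) = X := fun X => by rw [← Matrix.mul_assoc, hginv, Matrix.one_mul]
  ext u
  simp only [Set.mem_inter_iff, Set.mem_setOf_eq]
  constructor
  · rintro ⟨hu, h, ⟨hhSp, hhcomm⟩, hx⟩
    refine ⟨hu, ?_⟩
    have hucomm : ∀ a b : Fin (2*n),
        (u * (g * β.map mkr * g⁻¹) - (g * β.map mkr * g⁻¹) * u) a b ∈ I := by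
      intro a b
      have hid : u * (g * β.map mkr * g⁻¹) - (g * β.map mkr * g⁻¹) * u
          = g * ((h * β.map mkr - β.map mkr * h) * g⁻¹) := by
        rw [hx]
        simp only [Matrix.mul_assoc, Matrix.mul_sub, Matrix.sub_mul, hcl, hcl']
      rw [hid]
      exact entries_mem_mul_left I g _
        (entries_mem_mul_right I g⁻¹ _ hhcomm) a b
    have hupper : ∀ a b : Fin (2*n), (b:ℕ) ≤ (a:ℕ) → (u - 1) a b = 0 := by
      intro a b hba
      obtain ⟨-, hlow, hdiag⟩ := hu
      rcases lt_or_eq_of_le hba with hlt | heq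
      · have h1 : u a b = 0 := hlow a b hlt
        have h2 : (1 : Matrix (Fin (2*n)) (Fin (2*n)) (O ⧸ Ideal.span {ϖ^r})) a b = 0 :=
          Matrix.one_apply_ne (by intro hab; rw [hab] at hlt; omega)
        rw [Matrix.sub_apply, h1, h2, sub_zero]
      · have hab : b = a := Fin.ext heq
        subst hab
        rw [Matrix.sub_apply, hdiag, Matrix.one_apply_eq, sub_self]
    have hirr' : Irreducible ((β.map (Ideal.Quotient.mk (Ideal.span {ϖ}))).charpoly) := by
      rw [Matrix.charpoly_map]; exact hirr
    exact key_reduction (by omega : 0 < 2*n) hϖ hl' (by omega : l' < r) β hirr'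
      g g⁻¹ u hginv hupper hucomm
  · rintro ⟨hu, hcong⟩
    refine ⟨hu, g⁻¹ * u * g,
      ⟨sp_mul_mem (sp_mul_mem (sp_inv_mem hgSp) hu.1) hgSp, ?_⟩, ?_⟩
    · intro a b
      have hh1 : g⁻¹ * ((u - 1) * g) = g⁻¹ * u * g - 1 := by
        calc g⁻¹ * ((u - 1) * g) = g⁻¹ * (u * g - g) := by
              rw [Matrix.sub_mul, Matrix.one_mul]
          _ = g⁻¹ * (u * g) - g⁻¹ * g := by rw [Matrix.mul_sub]
          _ = g⁻¹ * u * g - 1 := by rw [hinvg, ← Matrix.mul_assoc]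
      have hent : ∀ a b : Fin (2*n), (g⁻¹ * u * g - 1) a b ∈ I := by
        intro a b
        rw [← hh1]
        exact entries_mem_mul_left I g⁻¹ _
          (entries_mem_mul_right I g _ hcong) a b
      have hid : (g⁻¹ * u * g) * β.map mkr - β.map mkr * (g⁻¹ * u * g)
          = (g⁻¹ * u * g - 1) * β.map mkr - β.map mkr * (g⁻¹ * u * g - 1) := by
        rw [Matrix.sub_mul, Matrix.mul_sub, Matrix.one_mul, Matrix.mul_one,
          sub_sub_sub_cancel_right]
      rw [hid, Matrix.sub_apply]
      exact I.sub_mem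
        (entries_mem_mul_right I (β.map mkr) _ hent a b)
        (entries_mem_mul_left I (β.map mkr) _ hent a b)
    · calc u = (g * g⁻¹) * u * (g * g⁻¹) := by
            rw [hginv, Matrix.one_mul, Matrix.mul_one]
        _ = g * (g⁻¹ * u * g) * g⁻¹ := by simp only [Matrix.mul_assoc]
end
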